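/- Let S and T be F-inverse monoids with maximal group images S/σ and T/σ. In the free product group S/σ * T/σ, writing each element uniquely as an alternating word g₁⋯gₙ in nontrivial elements of the two factors, the map φ(g₁⋯gₙ) = g₁^m ⋯ gₙ^m (product of the maxima of the σ-classes, computed in the free product M = S * T of inverse monoids) is a premorphism from S/σ * T/σ to M with σ ∘ φ = id. -/

import Mathlib

set_option linter.unusedSectionVars false


namespace Stmt14Aux

theorem ginv {G : Type} [Group G] {a x : G} (h : a * x * a = a) : x = a⁻¹ := by
  have h2 : a⁻¹ * (a * x * a) * a⁻¹ = a⁻¹ * a * a⁻¹ := by rw [h]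
  simpa [mul_assoc] using h2

variable {M : Type} [Monoid M] (inv : M → M)
variable (h1 : ∀ s, s * inv s * s = s) (h2 : ∀ s, inv s * s * inv s = inv s)
variable (hu : ∀ s t, s * t * s = s → t * s * t = t → t = inv s)

include h1 h2 hu

theorem inv_invol (s : M) : inv (inv s) = s := (hu (inv s) s (h2 s) (h1 s)).symm

theorem inv_idem {e : M} (he : e * e = e) : inv e = e :=
  (hu e e (by rw [he, he]) (by rw [he, he])).symm

theorem h1r (s x : M) : s * (inv s * (s * x)) = s * x := by
  have := congrArg (· * x) (h1 s); simpa only [mul_assoc] using this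

theorem h2r (s x : M) : inv s * (s * (inv s * x)) = inv s * x := by
  have := congrArg (· * x) (h2 s); simpa only [mul_assoc] using this

theorem h1e (s : M) : s * (inv s * s) = s := by rw [← mul_assoc]; exact h1 s
theorem h2e (s : M) : inv s * (s * inv s) = inv s := by rw [← mul_assoc]; exact h2 s

theorem mul_inv_idem (s : M) : (s * inv s) * (s * inv s) = s * inv s := by
  simp only [mul_assoc]; rw [h2e inv h1 h2 hu]
theorem inv_mul_idem (s : M) : (inv s * s) * (inv s * s) = inv s * s := by
  simp only [mul_assoc]; rw [h1e inv h1 h2 hu]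

theorem mul_idem {e f : M} (he : e * e = e) (hf : f * f = f) :
    (e * f) * (e * f) = e * f := by
  have he' : ∀ x, e * (e * x) = e * x := fun x => by rw [← mul_assoc, he]
  have hf' : ∀ x, f * (f * x) = f * x := fun x => by rw [← mul_assoc, hf]
  obtain ⟨a, ha⟩ : ∃ a, a = inv (e * f) := ⟨_, rfl⟩
  have A1r : e * (f * (a * (e * f))) = e * f := by
    rw [ha]; simpa only [mul_assoc] using h1 (e * f)
  have A2' : ∀ x, a * (e * (f * (a * x))) = a * x := fun x => by
    rw [ha]; have := congrArg (· * x) (h2 (e * f)); simpa only [mul_assoc] using this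
  have g1 : (e * f) * (f * a * e) * (e * f) = e * f := by
    simp only [mul_assoc]; rw [hf', he']; exact A1r
  have g2 : (f * a * e) * (e * f) * (f * a * e) = f * a * e := by
    simp only [mul_assoc]; rw [he', hf', A2']
  have key : f * a * e = a := (hu _ _ g1 g2).trans ha.symm
  have haa : a * a = a := by
    rw [← key]; simp only [mul_assoc]; rw [A2']
  have hiaa : inv a = a := inv_idem inv h1 h2 hu haa
  rw [ha] at hiaa
  have hia : e * f = a := by
    rw [ha, ← hiaa]; exact (inv_invol inv h1 h2 hu (e * f)).symm
  rw [hia]; exact haa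

theorem idem_comm {e f : M} (he : e * e = e) (hf : f * f = f) : e * f = f * e := by
  have hef := mul_idem inv h1 h2 hu he hf
  have hfe := mul_idem inv h1 h2 hu hf he
  have he' : ∀ x, e * (e * x) = e * x := fun x => by rw [← mul_assoc, he]
  have hf' : ∀ x, f * (f * x) = f * x := fun x => by rw [← mul_assoc, hf]
  have g1 : (e * f) * (f * e) * (e * f) = e * f := by
    simp only [mul_assoc]; rw [hf', he']
    simpa only [mul_assoc] using hef
  have g2 : (f * e) * (e * f) * (f * e) = f * e := by
    simp only [mul_assoc]; rw [he', hf']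
    simpa only [mul_assoc] using hfe
  have h := hu (e * f) (f * e) g1 g2
  rw [inv_idem inv h1 h2 hu hef] at h
  exact h.symm

theorem inv_mul_rev (a b : M) : inv (a * b) = inv b * inv a := by
  have comm := idem_comm inv h1 h2 hu (mul_inv_idem inv h1 h2 hu b) (inv_mul_idem inv h1 h2 hu a)
  have comm' : ∀ x, b * (inv b * (inv a * (a * x))) = inv a * (a * (b * (inv b * x))) :=
    fun x => by
      have := congrArg (· * x) comm; simpa only [mul_assoc] using this
  have g1 : (a * b) * (inv b * inv a) * (a * b) = a * b := by
    simp only [mul_assoc]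
    rw [comm', h1e inv h1 h2 hu b]
    exact h1r inv h1 h2 hu a b
  have g2 : (inv b * inv a) * (a * b) * (inv b * inv a) = inv b * inv a := by
    simp only [mul_assoc]
    rw [← comm', h2e inv h1 h2 hu a]
    exact h2r inv h1 h2 hu b (inv a)
  exact (hu _ _ g1 g2).symm

end Stmt14Aux

/-- Free products of F-inverse monoids: with `M` the free product of the F-inverse
monoids `S` and `T` (with maximal group images `GS`, `GT` and `Q = GS * GT` the
maximal group image of `M`, in which every element has a unique alternating
representation), the map sending an alternating word `g₁ ⋯ gₙ` to the product
`g₁^m ⋯ gₙ^m` of the maxima of the σ-classes is a premorphism `φ : Q → M` with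
`σ ∘ φ = id`. -/
theorem stmt14 {S T M GS GT Q : Type} [Monoid S] [Monoid T] [Monoid M]
    [Group GS] [Group GT] [Group Q]
    (invS : S → S) (invT : T → T) (invM : M → M)
    (hS1 : ∀ s, s * invS s * s = s) (hS2 : ∀ s, invS s * s * invS s = invS s)
    (hSu : ∀ s t, s * t * s = s → t * s * t = t → t = invS s)
    (hT1 : ∀ s, s * invT s * s = s) (hT2 : ∀ s, invT s * s * invT s = invT s)
    (hTu : ∀ s t, s * t * s = s → t * s * t = t → t = invT s)
    (hM1 : ∀ s, s * invM s * s = s) (hM2 : ∀ s, invM s * s * invM s = invM s)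
    (hMu : ∀ s t, s * t * s = s → t * s * t = t → t = invM s)
    -- maximal group images
    (πS : S →* GS) (πT : T →* GT) (π : M →* Q)
    (hπSuniv : ∀ (H : Type) [Group H] (f : S →* H), ∃ f' : GS →* H, ∀ s, f' (πS s) = f s)
    (hπTuniv : ∀ (H : Type) [Group H] (f : T →* H), ∃ f' : GT →* H, ∀ t, f' (πT t) = f t)
    (hπuniv : ∀ (H : Type) [Group H] (f : M →* H), ∃ f' : Q →* H, ∀ x, f' (π x) = f x)
    -- the factor inclusions into the free product M, preserving inverses
    (ιS : S →* M) (ιT : T →* M)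
    (hιSinv : ∀ s, ιS (invS s) = invM (ιS s)) (hιTinv : ∀ t, ιT (invT t) = invM (ιT t))
    -- the induced inclusions of the factor groups into Q, compatible with π
    (jS : GS →* Q) (jT : GT →* Q)
    (hcommS : ∀ s, π (ιS s) = jS (πS s)) (hcommT : ∀ t, π (ιT t) = jT (πT t))
    -- F-inverse structure: maxima of σ-classes
    (mS : GS → S) (mT : GT → T)
    (hmS1 : ∀ g, πS (mS g) = g)
    (hmS2 : ∀ (g : GS) (s : S), πS s = g → ∃ e : S, e * e = e ∧ s = mS g * e)
    (hmT1 : ∀ g, πT (mT g) = g)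
    (hmT2 : ∀ (g : GT) (t : T), πT t = g → ∃ e : T, e * e = e ∧ t = mT g * e)
    -- alternating words in nontrivial elements of the two factor groups
    (Alt : List (GS ⊕ GT) → Prop)
    (hAlt : ∀ L, Alt L ↔ (L.Chain' fun a b => a.isLeft ≠ b.isLeft) ∧
      ∀ x ∈ L, x ≠ Sum.inl 1 ∧ x ≠ Sum.inr 1)
    -- unique alternating representation of elements of Q = GS * GT
    (huniqrep : ∀ q : Q, ∃! L : List (GS ⊕ GT),
      Alt L ∧ (L.map (Sum.elim (⇑jS) (⇑jT))).prod = q) :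
    ∃ φ : Q → M,
      (∀ L : List (GS ⊕ GT), Alt L →
        φ ((L.map (Sum.elim (⇑jS) (⇑jT))).prod) =
          (L.map (Sum.elim (fun g => ιS (mS g)) (fun g => ιT (mT g)))).prod) ∧
      φ 1 = 1 ∧
      (∀ q : Q, φ q⁻¹ = invM (φ q)) ∧
      (∀ q r : Q, ∃ e : M, e * e = e ∧ φ q * φ r = φ (q * r) * e) ∧
      (∀ q : Q, π (φ q) = q) := by
  classical
  choose rep hrepspec using huniqrep
  -- abbreviations appear expanded: (Sum.elim (⇑jS) (⇑jT)) = Sum.elim (⇑jS) (⇑jT), (Sum.elim (fun g => ιS (mS g)) (fun g => ιT (mT g))) = Sum.elim (fun g => ιS (mS g)) (fun g => ιT (mT g))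
  -- basic facts
  have hπSinv : ∀ s, πS (invS s) = (πS s)⁻¹ := fun s =>
    Stmt14Aux.ginv (by rw [← map_mul, ← map_mul, hS1])
  have hπTinv : ∀ t, πT (invT t) = (πT t)⁻¹ := fun t =>
    Stmt14Aux.ginv (by rw [← map_mul, ← map_mul, hT1])
  have hmSinv : ∀ g : GS, mS g⁻¹ = invS (mS g) := by
    intro g
    have hx : πS (invS (mS g)) = g⁻¹ := by rw [hπSinv, hmS1]
    obtain ⟨e, he, hxe⟩ := hmS2 g⁻¹ (invS (mS g)) hx
    have hy : πS (invS (mS g⁻¹)) = g := by rw [hπSinv, hmS1, inv_inv]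
    obtain ⟨f, hf, hyf⟩ := hmS2 g (invS (mS g⁻¹)) hy
    have h5 : mS g⁻¹ = f * invS (mS g) := by
      conv_lhs => rw [← Stmt14Aux.inv_invol invS hS1 hS2 hSu (mS g⁻¹)]
      rw [hyf, Stmt14Aux.inv_mul_rev invS hS1 hS2 hSu,
        Stmt14Aux.inv_idem invS hS1 hS2 hSu hf]
    have hfy : f * mS g⁻¹ = mS g⁻¹ := by
      conv_lhs => rw [h5, ← mul_assoc, hf]
      exact h5.symm
    calc mS g⁻¹ = f * invS (mS g) := h5
      _ = f * (mS g⁻¹ * e) := by rw [← hxe]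
      _ = (f * mS g⁻¹) * e := by rw [mul_assoc]
      _ = mS g⁻¹ * e := by rw [hfy]
      _ = invS (mS g) := hxe.symm
  have hmTinv : ∀ g : GT, mT g⁻¹ = invT (mT g) := by
    intro g
    have hx : πT (invT (mT g)) = g⁻¹ := by rw [hπTinv, hmT1]
    obtain ⟨e, he, hxe⟩ := hmT2 g⁻¹ (invT (mT g)) hx
    have hy : πT (invT (mT g⁻¹)) = g := by rw [hπTinv, hmT1, inv_inv]
    obtain ⟨f, hf, hyf⟩ := hmT2 g (invT (mT g⁻¹)) hy
    have h5 : mT g⁻¹ = f * invT (mT g) := by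
      conv_lhs => rw [← Stmt14Aux.inv_invol invT hT1 hT2 hTu (mT g⁻¹)]
      rw [hyf, Stmt14Aux.inv_mul_rev invT hT1 hT2 hTu,
        Stmt14Aux.inv_idem invT hT1 hT2 hTu hf]
    have hfy : f * mT g⁻¹ = mT g⁻¹ := by
      conv_lhs => rw [h5, ← mul_assoc, hf]
      exact h5.symm
    calc mT g⁻¹ = f * invT (mT g) := h5
      _ = f * (mT g⁻¹ * e) := by rw [← hxe]
      _ = (f * mT g⁻¹) * e := by rw [mul_assoc]
      _ = mT g⁻¹ * e := by rw [hfy]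
      _ = invT (mT g) := hxe.symm
  have hinvM1 : invM 1 = 1 := Stmt14Aux.inv_idem invM hM1 hM2 hMu (one_mul 1)
  -- Alt helpers
  have hAltentries : ∀ L, Alt L → ∀ x ∈ L, x ≠ Sum.inl 1 ∧ x ≠ Sum.inr 1 :=
    fun L hL => ((hAlt L).mp hL).2
  have hAltnil : Alt ([] : List (GS ⊕ GT)) := (hAlt []).mpr ⟨List.isChain_nil, by simp⟩
  have hAltsing : ∀ x : GS ⊕ GT, x ≠ Sum.inl 1 → x ≠ Sum.inr 1 → Alt [x] := by
    intro x h1 h2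
    refine (hAlt _).mpr ⟨List.isChain_singleton _, ?_⟩
    intro y hy; rw [List.mem_singleton] at hy; subst hy; exact ⟨h1, h2⟩
  have hAltpre : ∀ (L : List (GS ⊕ GT)) y, Alt (L ++ [y]) → Alt L := by
    intro L y h; rw [hAlt] at h ⊢
    exact ⟨(List.isChain_append.mp h.1).1, fun x hx => h.2 x (List.mem_append_left _ hx)⟩
  have hAltrep : ∀ (L : List (GS ⊕ GT)) y y', Alt (L ++ [y]) → y.isLeft = y'.isLeft →
      y' ≠ Sum.inl 1 → y' ≠ Sum.inr 1 → Alt (L ++ [y']) := by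
    intro L y y' h hiso hn1 hn2
    rw [hAlt] at h ⊢
    obtain ⟨hc, hm⟩ := h
    simp only [List.Chain', List.isChain_append] at hc ⊢
    refine ⟨⟨hc.1, List.isChain_singleton _, ?_⟩, ?_⟩
    · intro a ha b hb
      simp only [List.head?_cons, Option.mem_def, Option.some.injEq] at hb
      subst hb
      rw [← hiso]
      exact hc.2.2 a ha y (by simp)
    · intro x hx
      rcases List.mem_append.mp hx with h' | h'
      · exact hm x (List.mem_append_left _ h')
      · rw [List.mem_singleton] at h'; subst h'; exact ⟨hn1, hn2⟩
  have hAltext : ∀ (L : List (GS ⊕ GT)) y x, Alt (L ++ [y]) → y.isLeft ≠ x.isLeft →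
      x ≠ Sum.inl 1 → x ≠ Sum.inr 1 → Alt ((L ++ [y]) ++ [x]) := by
    intro L y x h hxy hn1 hn2
    rw [hAlt] at h ⊢
    refine ⟨List.isChain_append.mpr ⟨h.1, List.isChain_singleton _, ?_⟩, ?_⟩
    · intro a ha b hb
      simp only [List.head?_cons, Option.mem_def, Option.some.injEq] at hb
      subst hb
      rw [List.getLast?_concat] at ha
      simp only [Option.mem_def, Option.some.injEq] at ha
      subst ha
      exact hxy
    · intro z hz
      rcases List.mem_append.mp hz with h' | h'
      · exact h.2 z h'
      · rw [List.mem_singleton] at h'; subst h'; exact ⟨hn1, hn2⟩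
  -- natural order multiplication lemma in M
  have hLemul : ∀ (b c e : M), e * e = e → ∃ e', e' * e' = e' ∧ (b * e) * c = (b * c) * e' := by
    intro b c e he
    have comm := Stmt14Aux.idem_comm invM hM1 hM2 hMu
      (Stmt14Aux.mul_inv_idem invM hM1 hM2 hMu c) he
    have hkey : c * (invM c * (e * c)) = e * c := by
      calc c * (invM c * (e * c)) = (c * invM c * e) * c := by simp only [mul_assoc]
        _ = (e * (c * invM c)) * c := by rw [comm]
        _ = e * (c * (invM c * c)) := by simp only [mul_assoc]
        _ = e * c := by rw [Stmt14Aux.h1e invM hM1 hM2 hMu c]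
    refine ⟨invM c * (e * c), ?_, ?_⟩
    · calc (invM c * (e * c)) * (invM c * (e * c))
          = invM c * (e * (c * (invM c * (e * c)))) := by simp only [mul_assoc]
        _ = invM c * (e * (e * c)) := by rw [hkey]
        _ = invM c * ((e * e) * c) := by rw [← mul_assoc e e c]
        _ = invM c * (e * c) := by rw [he]
    · calc (b * e) * c = b * (e * c) := by rw [mul_assoc]
        _ = b * (c * (invM c * (e * c))) := by rw [hkey]
        _ = (b * c) * (invM c * (e * c)) := by simp only [mul_assoc]
  -- products
  have hπm : ∀ L : List (GS ⊕ GT), π ((L.map (Sum.elim (fun g => ιS (mS g)) (fun g => ιT (mT g)))).prod) = (L.map (Sum.elim (⇑jS) (⇑jT))).prod := by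
    intro L
    induction L with
    | nil => simp
    | cons x L ih =>
      simp only [List.map_cons, List.prod_cons, map_mul, ih]
      congr 1
      rcases x with a | a
      · simp only [Sum.elim_inl]; rw [hcommS, hmS1]
      · simp only [Sum.elim_inr]; rw [hcommT, hmT1]
  have hmf_inv : ∀ x : GS ⊕ GT,
      (Sum.elim (fun g => ιS (mS g)) (fun g => ιT (mT g))) (Sum.map (fun a : GS => a⁻¹) (fun a : GT => a⁻¹) x) = invM ((Sum.elim (fun g => ιS (mS g)) (fun g => ιT (mT g))) x) := by
    rintro (a | a)
    · simp only [Sum.map_inl, Sum.elim_inl]; rw [hmSinv, hιSinv]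
    · simp only [Sum.map_inr, Sum.elim_inr]; rw [hmTinv, hιTinv]
  have hprodinv : ∀ L : List (GS ⊕ GT),
      (((L.map (Sum.map (fun a : GS => a⁻¹) (fun a : GT => a⁻¹))).reverse).map (Sum.elim (fun g => ιS (mS g)) (fun g => ιT (mT g)))).prod
        = invM ((L.map (Sum.elim (fun g => ιS (mS g)) (fun g => ιT (mT g)))).prod) := by
    intro L
    induction L with
    | nil => simpa using hinvM1.symm
    | cons x L ih =>
      simp only [List.map_cons, List.reverse_cons, List.map_append, List.prod_append,
        List.map_nil, List.prod_nil, List.map_cons, List.prod_cons, mul_one, ih]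
      rw [hmf_inv, Stmt14Aux.inv_mul_rev invM hM1 hM2 hMu]
  have hprodinvQ : ∀ L : List (GS ⊕ GT),
      (((L.map (Sum.map (fun a : GS => a⁻¹) (fun a : GT => a⁻¹))).reverse).map (Sum.elim (⇑jS) (⇑jT))).prod
        = ((L.map (Sum.elim (⇑jS) (⇑jT))).prod)⁻¹ := by
    intro L
    induction L with
    | nil => simp
    | cons x L ih =>
      simp only [List.map_cons, List.reverse_cons, List.map_append, List.prod_append,
        List.map_nil, List.prod_nil, List.map_cons, List.prod_cons, mul_one, ih, mul_inv_rev]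
      congr 1
      rcases x with a | a <;> simp
  have hAltinv : ∀ L, Alt L →
      Alt ((L.map (Sum.map (fun a : GS => a⁻¹) (fun a : GT => a⁻¹))).reverse) := by
    intro L hL
    rw [hAlt] at hL ⊢
    constructor
    · simp only [List.Chain', List.isChain_reverse, List.isChain_map]
      refine List.IsChain.imp ?_ hL.1
      intro a b hab
      show (Sum.map _ _ b).isLeft ≠ (Sum.map _ _ a).isLeft
      simp only [Sum.isLeft_map]
      exact hab.symm
    · intro x hx
      rw [List.mem_reverse, List.mem_map] at hx
      obtain ⟨y, hy, rfl⟩ := hx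
      obtain ⟨hy1, hy2⟩ := hL.2 y hy
      rcases y with a | a
      · simp only [ne_eq, Sum.inl.injEq] at hy1
        constructor
        · simp only [Sum.map_inl, ne_eq, Sum.inl.injEq, inv_eq_one]; exact hy1
        · simp
      · simp only [ne_eq, Sum.inr.injEq] at hy2
        constructor
        · simp
        · simp only [Sum.map_inr, ne_eq, Sum.inr.injEq, inv_eq_one]; exact hy2
  -- the step lemma
  have hstep : ∀ (q : Q) (x : GS ⊕ GT), x ≠ Sum.inl 1 → x ≠ Sum.inr 1 →
      ∃ e : M, e * e = e ∧
        (((rep q).map (Sum.elim (fun g => ιS (mS g)) (fun g => ιT (mT g)))).prod) * (Sum.elim (fun g => ιS (mS g)) (fun g => ιT (mT g))) x = ((rep (q * (Sum.elim (⇑jS) (⇑jT)) x)).map (Sum.elim (fun g => ιS (mS g)) (fun g => ιT (mT g)))).prod * e := by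
    intro q x hx1 hx2
    obtain ⟨hAq, hPq⟩ := (hrepspec q).1
    rcases List.eq_nil_or_concat (rep q) with hnil | ⟨L₀, y, hcons⟩
    · have hq1 : q = 1 := by rw [← hPq, hnil]; simp
      have hxrep : rep ((Sum.elim (⇑jS) (⇑jT)) x) = [x] := ((hrepspec _).2 [x] ⟨hAltsing x hx1 hx2, by simp⟩).symm
      refine ⟨1, by simp, ?_⟩
      rw [hnil, hq1, one_mul, hxrep]
      simp
    · rw [List.concat_eq_append] at hcons
      rw [hcons] at hAq hPq ⊢
      rcases y with a | a <;> rcases x with g | g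
      · -- both left
        have ha1 := (hAltentries _ hAq (Sum.inl a) (by simp)).1
        have hg : g ≠ 1 := fun h => hx1 (by rw [h])
        by_cases hag : a * g = 1
        · have hga : g = a⁻¹ := eq_inv_of_mul_eq_one_right hag
          have hrep' : rep (q * (Sum.elim (⇑jS) (⇑jT)) (Sum.inl g)) = L₀ := by
            refine ((hrepspec _).2 L₀ ⟨hAltpre _ _ hAq, ?_⟩).symm
            rw [← hPq]
            simp only [List.map_append, List.prod_append, List.map_cons, List.map_nil,
              List.prod_cons, List.prod_nil, mul_one, Sum.elim_inl]
            rw [mul_assoc, ← map_mul, hag, map_one, mul_one]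
          refine ⟨ιS (mS a * invS (mS a)), ?_, ?_⟩
          · rw [← map_mul, Stmt14Aux.mul_inv_idem invS hS1 hS2 hSu]
          · rw [hrep']
            simp only [List.map_append, List.prod_append, List.map_cons, List.map_nil,
              List.prod_cons, List.prod_nil, mul_one, Sum.elim_inl]
            rw [hga, hmSinv, mul_assoc, ← map_mul]
        · obtain ⟨e, he, hme⟩ := hmS2 (a * g) (mS a * mS g) (by rw [map_mul, hmS1, hmS1])
          have hrep' : rep (q * (Sum.elim (⇑jS) (⇑jT)) (Sum.inl g)) = L₀ ++ [Sum.inl (a * g)] := by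
            refine ((hrepspec _).2 _ ⟨hAltrep L₀ (Sum.inl a) (Sum.inl (a * g)) hAq rfl (fun h => hag (Sum.inl.inj h)) (by simp), ?_⟩).symm
            rw [← hPq]
            simp only [List.map_append, List.prod_append, List.map_cons, List.map_nil,
              List.prod_cons, List.prod_nil, mul_one, Sum.elim_inl]
            rw [map_mul, mul_assoc]
          refine ⟨ιS e, by rw [← map_mul, he], ?_⟩
          rw [hrep']
          simp only [List.map_append, List.prod_append, List.map_cons, List.map_nil,
            List.prod_cons, List.prod_nil, mul_one, Sum.elim_inl]
          rw [mul_assoc, ← map_mul, hme, map_mul, ← mul_assoc]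
      · -- left then right
        have hrep' : rep (q * (Sum.elim (⇑jS) (⇑jT)) (Sum.inr g)) = (L₀ ++ [Sum.inl a]) ++ [Sum.inr g] := by
          refine ((hrepspec _).2 _ ⟨hAltext _ _ _ hAq (by simp) (by simp) hx2, ?_⟩).symm
          rw [← hPq]
          simp [List.map_append, List.prod_append, mul_assoc]
        refine ⟨1, by simp, ?_⟩
        rw [hrep', mul_one]
        simp [List.map_append, List.prod_append, mul_assoc]
      · -- right then left
        have hrep' : rep (q * (Sum.elim (⇑jS) (⇑jT)) (Sum.inl g)) = (L₀ ++ [Sum.inr a]) ++ [Sum.inl g] := by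
          refine ((hrepspec _).2 _ ⟨hAltext _ _ _ hAq (by simp) hx1 (by simp), ?_⟩).symm
          rw [← hPq]
          simp [List.map_append, List.prod_append, mul_assoc]
        refine ⟨1, by simp, ?_⟩
        rw [hrep', mul_one]
        simp [List.map_append, List.prod_append, mul_assoc]
      · -- both right
        have ha1 := (hAltentries _ hAq (Sum.inr a) (by simp)).2
        have hg : g ≠ 1 := fun h => hx2 (by rw [h])
        by_cases hag : a * g = 1
        · have hga : g = a⁻¹ := eq_inv_of_mul_eq_one_right hag
          have hrep' : rep (q * (Sum.elim (⇑jS) (⇑jT)) (Sum.inr g)) = L₀ := by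
            refine ((hrepspec _).2 L₀ ⟨hAltpre _ _ hAq, ?_⟩).symm
            rw [← hPq]
            simp only [List.map_append, List.prod_append, List.map_cons, List.map_nil,
              List.prod_cons, List.prod_nil, mul_one, Sum.elim_inr]
            rw [mul_assoc, ← map_mul, hag, map_one, mul_one]
          refine ⟨ιT (mT a * invT (mT a)), ?_, ?_⟩
          · rw [← map_mul, Stmt14Aux.mul_inv_idem invT hT1 hT2 hTu]
          · rw [hrep']
            simp only [List.map_append, List.prod_append, List.map_cons, List.map_nil,
              List.prod_cons, List.prod_nil, mul_one, Sum.elim_inr]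
            rw [hga, hmTinv, mul_assoc, ← map_mul]
        · obtain ⟨e, he, hme⟩ := hmT2 (a * g) (mT a * mT g) (by rw [map_mul, hmT1, hmT1])
          have hrep' : rep (q * (Sum.elim (⇑jS) (⇑jT)) (Sum.inr g)) = L₀ ++ [Sum.inr (a * g)] := by
            refine ((hrepspec _).2 _ ⟨hAltrep L₀ (Sum.inr a) (Sum.inr (a * g)) hAq rfl (by simp) (fun h => hag (Sum.inr.inj h)), ?_⟩).symm
            rw [← hPq]
            simp only [List.map_append, List.prod_append, List.map_cons, List.map_nil,
              List.prod_cons, List.prod_nil, mul_one, Sum.elim_inr]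
            rw [map_mul, mul_assoc]
          refine ⟨ιT e, by rw [← map_mul, he], ?_⟩
          rw [hrep']
          simp only [List.map_append, List.prod_append, List.map_cons, List.map_nil,
            List.prod_cons, List.prod_nil, mul_one, Sum.elim_inr]
          rw [mul_assoc, ← map_mul, hme, map_mul, ← mul_assoc]
  -- main multiplication lemma
  have hmain : ∀ L : List (GS ⊕ GT), (∀ x ∈ L, x ≠ Sum.inl 1 ∧ x ≠ Sum.inr 1) → ∀ q : Q,
      ∃ e : M, e * e = e ∧
        ((rep q).map (Sum.elim (fun g => ιS (mS g)) (fun g => ιT (mT g)))).prod * (L.map (Sum.elim (fun g => ιS (mS g)) (fun g => ιT (mT g)))).prod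
          = ((rep (q * (L.map (Sum.elim (⇑jS) (⇑jT))).prod)).map (Sum.elim (fun g => ιS (mS g)) (fun g => ιT (mT g)))).prod * e := by
    intro L
    induction L with
    | nil => intro _ q; exact ⟨1, by simp, by simp⟩
    | cons x L ih =>
      intro hmem q
      obtain ⟨hx1, hx2⟩ := hmem x (by simp)
      obtain ⟨e₁, he₁, hstep₁⟩ := hstep q x hx1 hx2
      obtain ⟨e₂, he₂, hmul⟩ := hLemul (((rep (q * (Sum.elim (⇑jS) (⇑jT)) x)).map (Sum.elim (fun g => ιS (mS g)) (fun g => ιT (mT g)))).prod) ((L.map (Sum.elim (fun g => ιS (mS g)) (fun g => ιT (mT g)))).prod) e₁ he₁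
      obtain ⟨e₃, he₃, hih⟩ := ih (fun z hz => hmem z (by simp [hz])) (q * (Sum.elim (⇑jS) (⇑jT)) x)
      refine ⟨e₃ * e₂, Stmt14Aux.mul_idem invM hM1 hM2 hMu he₃ he₂, ?_⟩
      have hassoc : q * ((x :: L).map (Sum.elim (⇑jS) (⇑jT))).prod = (q * (Sum.elim (⇑jS) (⇑jT)) x) * (L.map (Sum.elim (⇑jS) (⇑jT))).prod := by
        simp [List.prod_cons, mul_assoc]
      rw [hassoc]
      calc ((rep q).map (Sum.elim (fun g => ιS (mS g)) (fun g => ιT (mT g)))).prod * ((x :: L).map (Sum.elim (fun g => ιS (mS g)) (fun g => ιT (mT g)))).prod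
          = (((rep q).map (Sum.elim (fun g => ιS (mS g)) (fun g => ιT (mT g)))).prod * (Sum.elim (fun g => ιS (mS g)) (fun g => ιT (mT g))) x) * (L.map (Sum.elim (fun g => ιS (mS g)) (fun g => ιT (mT g)))).prod := by
            simp only [List.map_cons, List.prod_cons]; rw [mul_assoc]
        _ = (((rep (q * (Sum.elim (⇑jS) (⇑jT)) x)).map (Sum.elim (fun g => ιS (mS g)) (fun g => ιT (mT g)))).prod * e₁) * (L.map (Sum.elim (fun g => ιS (mS g)) (fun g => ιT (mT g)))).prod := by rw [hstep₁]
        _ = (((rep (q * (Sum.elim (⇑jS) (⇑jT)) x)).map (Sum.elim (fun g => ιS (mS g)) (fun g => ιT (mT g)))).prod * (L.map (Sum.elim (fun g => ιS (mS g)) (fun g => ιT (mT g)))).prod) * e₂ := hmul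
        _ = (((rep ((q * (Sum.elim (⇑jS) (⇑jT)) x) * (L.map (Sum.elim (⇑jS) (⇑jT))).prod)).map (Sum.elim (fun g => ιS (mS g)) (fun g => ιT (mT g)))).prod * e₃) * e₂ := by rw [hih]
        _ = ((rep ((q * (Sum.elim (⇑jS) (⇑jT)) x) * (L.map (Sum.elim (⇑jS) (⇑jT))).prod)).map (Sum.elim (fun g => ιS (mS g)) (fun g => ιT (mT g)))).prod * (e₃ * e₂) := by
            rw [mul_assoc]
  -- conclusion
  refine ⟨fun q => ((rep q).map (Sum.elim (fun g => ιS (mS g)) (fun g => ιT (mT g)))).prod, ?_, ?_, ?_, ?_, ?_⟩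
  · intro L hL
    show ((rep ((L.map (Sum.elim (⇑jS) (⇑jT))).prod)).map (Sum.elim (fun g => ιS (mS g)) (fun g => ιT (mT g)))).prod = (L.map (Sum.elim (fun g => ιS (mS g)) (fun g => ιT (mT g)))).prod
    rw [← (hrepspec _).2 L ⟨hL, rfl⟩]
  · show ((rep (1 : Q)).map (Sum.elim (fun g => ιS (mS g)) (fun g => ιT (mT g)))).prod = 1
    rw [← (hrepspec (1 : Q)).2 [] ⟨hAltnil, by simp⟩]
    simp
  · intro q
    show ((rep q⁻¹).map (Sum.elim (fun g => ιS (mS g)) (fun g => ιT (mT g)))).prod = invM (((rep q).map (Sum.elim (fun g => ιS (mS g)) (fun g => ιT (mT g)))).prod)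
    have h1' := (hrepspec q).1
    have hAlt' := hAltinv _ h1'.1
    have hprodQ : ((((rep q).map (Sum.map (fun a : GS => a⁻¹) (fun a : GT => a⁻¹))).reverse).map (Sum.elim (⇑jS) (⇑jT))).prod = q⁻¹ := by
      rw [hprodinvQ, h1'.2]
    rw [← (hrepspec q⁻¹).2 _ ⟨hAlt', hprodQ⟩, hprodinv]
  · intro q r
    show ∃ e : M, e * e = e ∧
      ((rep q).map (Sum.elim (fun g => ιS (mS g)) (fun g => ιT (mT g)))).prod * ((rep r).map (Sum.elim (fun g => ιS (mS g)) (fun g => ιT (mT g)))).prod = ((rep (q * r)).map (Sum.elim (fun g => ιS (mS g)) (fun g => ιT (mT g)))).prod * e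
    obtain ⟨e, he, hq⟩ := hmain (rep r) (hAltentries _ (hrepspec r).1.1) q
    rw [(hrepspec r).1.2] at hq
    exact ⟨e, he, hq⟩
  · intro q
    show π (((rep q).map (Sum.elim (fun g => ιS (mS g)) (fun g => ιT (mT g)))).prod) = q
    rw [hπm, (hrepspec q).1.2]
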